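/- Let η ∈ (0, 0.5), ε > 0, and consider a rooted tree 𝒯 of adaptive experiments where each node v is assigned an evolution time t⁽ᵛ⁾ ≥ 0 and a pair of outcome distributions p₊⁽ᵛ⁾, p₋⁽ᵛ⁾ over its children satisfying TV(p₊⁽ᵛ⁾, p₋⁽ᵛ⁾) ≤ (1-η)·min(2ε t⁽ᵛ⁾, 1). Let p₊^𝒯, p₋^𝒯 be the induced distributions over leaves (multiplying transition probabilities along root-to-leaf paths), and let t(𝒯) be the maximum over root-to-leaf paths of the sum of node evolution times. Then TV(p₊^𝒯, p₋^𝒯) ≤ 1 - η^{2ε·t(𝒯)}. -/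

import Mathlib

/-- A rooted tree of adaptive experiments: each internal node carries an evolution time
`t`, a pair of outcome distributions `pP, pM` over its `n+1` children, and the subtrees. -/
inductive ExpTree : Type
  | leaf : ExpTree
  | node (t : ℝ) (n : ℕ) (pP pM : Fin (n + 1) → ℝ)
      (child : Fin (n + 1) → ExpTree) : ExpTree

namespace ExpTree

/-- The maximum over root-to-leaf paths of the sum of node evolution times. -/
noncomputable def maxTime : ExpTree → ℝ
  | leaf => 0
  | node t _ _ _ child => t + Finset.univ.sup' Finset.univ_nonempty
      fun i => maxTime (child i)

/-- Induced distribution over leaves (encoded as root-to-leaf paths, i.e. lists of child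
indices), under the `+` hypothesis: product of the `pP` transition probabilities. -/
noncomputable def probP : ExpTree → List ℕ → ℝ
  | leaf, [] => 1
  | leaf, _ :: _ => 0
  | node _ _ _ _ _, [] => 0
  | node _ n pP _ child, i :: rest =>
      if h : i < n + 1 then pP ⟨i, h⟩ * probP (child ⟨i, h⟩) rest else 0

/-- Induced distribution over leaves under the `-` hypothesis. -/
noncomputable def probM : ExpTree → List ℕ → ℝ
  | leaf, [] => 1
  | leaf, _ :: _ => 0
  | node _ _ _ _ _, [] => 0
  | node _ n _ pM child, i :: rest =>
      if h : i < n + 1 then pM ⟨i, h⟩ * probM (child ⟨i, h⟩) rest else 0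

/-- Validity of a tree of experiments: at every node, the evolution time is nonnegative,
`pP, pM` are probability distributions over the children, and their total variation
distance is at most `(1-η)·min(2εt, 1)`. -/
def valid (η ε : ℝ) : ExpTree → Prop
  | leaf => True
  | node t _ pP pM child =>
      0 ≤ t ∧ (∀ i, 0 ≤ pP i) ∧ (∀ i, 0 ≤ pM i) ∧
      (∑ i, pP i) = 1 ∧ (∑ i, pM i) = 1 ∧
      (1 / 2) * (∑ i, |pP i - pM i|) ≤ (1 - η) * min (2 * ε * t) 1 ∧
      ∀ i, valid η ε (child i)

end ExpTree


namespace MyAux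
open ExpTree ENNReal

theorem maxTime_nonneg (η ε : ℝ) : ∀ T : ExpTree, T.valid η ε → 0 ≤ T.maxTime
  | .leaf, _ => le_refl 0
  | .node t n pP pM child, h => by
      have h0 : 0 ≤ maxTime (child 0) := maxTime_nonneg η ε _ (h.2.2.2.2.2.2 0)
      have := Finset.le_sup' (fun i => maxTime (child i)) (Finset.mem_univ (0 : Fin (n+1)))
      simp only [maxTime]
      linarith [h.1]

theorem probP_nonneg (η ε : ℝ) : ∀ T : ExpTree, T.valid η ε → ∀ ℓ, 0 ≤ T.probP ℓ
  | .leaf, _, [] => by simp [probP]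
  | .leaf, _, (_ :: _) => le_of_eq rfl
  | .node t n pP pM child, h, [] => le_refl 0
  | .node t n pP pM child, h, (i :: r) => by
      simp only [probP]
      split
      · exact mul_nonneg (h.2.1 _) (probP_nonneg η ε _ (h.2.2.2.2.2.2 _) r)
      · exact le_refl 0

theorem probM_nonneg (η ε : ℝ) : ∀ T : ExpTree, T.valid η ε → ∀ ℓ, 0 ≤ T.probM ℓ
  | .leaf, _, [] => by simp [probM]
  | .leaf, _, (_ :: _) => le_of_eq rfl
  | .node t n pP pM child, h, [] => le_refl 0
  | .node t n pP pM child, h, (i :: r) => by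
      simp only [probM]
      split
      · exact mul_nonneg (h.2.2.1 _) (probM_nonneg η ε _ (h.2.2.2.2.2.2 _) r)
      · exact le_refl 0

/-- reindexing: a function on lists vanishing at [] -/
theorem tsum_cons (f : List ℕ → ℝ≥0∞) (h0 : f [] = 0) :
    ∑' ℓ, f ℓ = ∑' (i : ℕ), ∑' (r : List ℕ), f (i :: r) := by
  have hinj : Function.Injective (fun p : ℕ × List ℕ => p.1 :: p.2) := by
    intro ⟨a,b⟩ ⟨c,d⟩ h
    simp_all
  have hsupp : Function.support f ⊆ Set.range (fun p : ℕ × List ℕ => p.1 :: p.2) := by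
    intro ℓ hℓ
    match ℓ with
    | [] => exact absurd h0 hℓ
    | (i :: r) => exact ⟨(i, r), rfl⟩
  rw [← hinj.tsum_eq hsupp, ← ENNReal.tsum_prod]

theorem tsum_to_fin {n : ℕ} (f : ℕ → ℝ≥0∞) (h : ∀ i, ¬ i < n + 1 → f i = 0) :
    ∑' i, f i = ∑ i : Fin (n+1), f i := by
  rw [tsum_eq_sum (s := Finset.range (n+1)) (fun i hi => h i (by simpa using hi)),
    Finset.sum_range fun i => f i]

theorem tsum_probP (η ε : ℝ) :
    ∀ T : ExpTree, T.valid η ε → ∑' ℓ, ENNReal.ofReal (T.probP ℓ) = 1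
  | .leaf, _ => by
      rw [tsum_eq_single ([] : List ℕ)]
      · simp [probP]
      · intro ℓ hℓ
        match ℓ with
        | [] => exact absurd rfl hℓ
        | (i :: r) => simp [probP]
  | .node t n pP pM child, h => by
      rw [tsum_cons _ (by simp [probP]),
        tsum_to_fin (n := n) _ (fun i hi => by
          rw [ENNReal.tsum_eq_zero.2]
          intro r; simp only [probP, dif_neg hi, ENNReal.ofReal_zero])]
      have : ∀ i : Fin (n+1), ∑' r, ENNReal.ofReal (probP (.node t n pP pM child) (↑i :: r))
          = ENNReal.ofReal (pP i) := by
        intro i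
        have : ∀ r, ENNReal.ofReal (probP (.node t n pP pM child) (↑i :: r))
            = ENNReal.ofReal (pP i) * ENNReal.ofReal (probP (child i) r) := by
          intro r
          simp only [probP, dif_pos i.isLt, Fin.eta]
          exact ENNReal.ofReal_mul (h.2.1 i)
        rw [tsum_congr this, ENNReal.tsum_mul_left,
          tsum_probP η ε (child i) (h.2.2.2.2.2.2 i), mul_one]
      rw [Finset.sum_congr rfl (fun i _ => this i), ← ENNReal.ofReal_sum_of_nonneg
        (fun i _ => h.2.1 i), h.2.2.2.1, ENNReal.ofReal_one]

theorem tsum_probM (η ε : ℝ) :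
    ∀ T : ExpTree, T.valid η ε → ∑' ℓ, ENNReal.ofReal (T.probM ℓ) = 1
  | .leaf, _ => by
      rw [tsum_eq_single ([] : List ℕ)]
      · simp [probM]
      · intro ℓ hℓ
        match ℓ with
        | [] => exact absurd rfl hℓ
        | (i :: r) => simp [probM]
  | .node t n pP pM child, h => by
      rw [tsum_cons _ (by simp [probM]),
        tsum_to_fin (n := n) _ (fun i hi => by
          rw [ENNReal.tsum_eq_zero.2]
          intro r; simp only [probM, dif_neg hi, ENNReal.ofReal_zero])]
      have : ∀ i : Fin (n+1), ∑' r, ENNReal.ofReal (probM (.node t n pP pM child) (↑i :: r))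
          = ENNReal.ofReal (pM i) := by
        intro i
        have : ∀ r, ENNReal.ofReal (probM (.node t n pP pM child) (↑i :: r))
            = ENNReal.ofReal (pM i) * ENNReal.ofReal (probM (child i) r) := by
          intro r
          simp only [probM, dif_pos i.isLt, Fin.eta]
          exact ENNReal.ofReal_mul (h.2.2.1 i)
        rw [tsum_congr this, ENNReal.tsum_mul_left,
          tsum_probM η ε (child i) (h.2.2.2.2.2.2 i), mul_one]
      rw [Finset.sum_congr rfl (fun i _ => this i), ← ENNReal.ofReal_sum_of_nonneg
        (fun i _ => h.2.2.1 i), h.2.2.2.2.1, ENNReal.ofReal_one]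

theorem chord {η : ℝ} (hη0 : 0 < η) (hη1 : η ≤ 1) {x : ℝ} (hx0 : 0 ≤ x) (hx1 : x ≤ 1) :
    η ^ x ≤ 1 - (1 - η) * x := by
  have h := convexOn_exp.2 (Set.mem_univ (0:ℝ)) (Set.mem_univ (Real.log η))
    (by linarith : (0:ℝ) ≤ 1 - x) hx0 (by ring)
  rw [Real.rpow_def_of_pos hη0]
  simp only [smul_eq_mul, mul_zero, zero_add, Real.exp_zero, Real.exp_log hη0] at h
  calc Real.exp (Real.log η * x) = Real.exp (x * Real.log η) := by rw [mul_comm]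
    _ ≤ (1 - x) * 1 + x * η := h
    _ = 1 - (1 - η) * x := by ring

theorem min_eq_half (a b : ℝ) : min a b = (a + b - |a - b|) / 2 := by
  rcases le_total a b with h | h
  · rw [min_eq_left h, abs_of_nonpos (by linarith)]; ring
  · rw [min_eq_right h, abs_of_nonneg (by linarith)]; ring

end MyAux

namespace MyAux
open ExpTree ENNReal

theorem ptwise {a b P M : ℝ} (ha : 0 ≤ a) (hab : a ≤ b) (hM : 0 ≤ M) :
    |a * P - b * M| ≤ a * |P - M| + (b - a) * M := by
  calc |a * P - b * M| = |a * (P - M) + (a - b) * M| := by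
        rw [show a * P - b * M = a * (P - M) + (a - b) * M from by ring]
    _ ≤ |a * (P - M)| + |(a - b) * M| := abs_add_le _ _
    _ = a * |P - M| + (b - a) * M := by
        rw [abs_mul, abs_mul, abs_of_nonneg ha,
          abs_of_nonpos (by linarith : a - b ≤ 0), abs_of_nonneg hM]
        ring

theorem branch_le {a b : ℝ} (ha : 0 ≤ a) (hab : a ≤ b) {P M : List ℕ → ℝ}
    (hMn : ∀ r, 0 ≤ M r)
    (hMs : ∑' r, ENNReal.ofReal (M r) = 1) {C : ℝ≥0∞}
    (hC : ∑' r, ENNReal.ofReal |P r - M r| ≤ C) :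
    ∑' r, ENNReal.ofReal |a * P r - b * M r|
      ≤ ENNReal.ofReal a * C + ENNReal.ofReal (b - a) := by
  have pt : ∀ r, ENNReal.ofReal |a * P r - b * M r|
      ≤ ENNReal.ofReal a * ENNReal.ofReal |P r - M r|
        + ENNReal.ofReal (b - a) * ENNReal.ofReal (M r) := by
    intro r
    rw [← ENNReal.ofReal_mul ha, ← ENNReal.ofReal_mul (by linarith : 0 ≤ b - a),
      ← ENNReal.ofReal_add (by positivity) (mul_nonneg (by linarith) (hMn r))]
    exact ENNReal.ofReal_le_ofReal (ptwise ha hab (hMn r))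
  calc ∑' r, ENNReal.ofReal |a * P r - b * M r|
      ≤ ∑' r, (ENNReal.ofReal a * ENNReal.ofReal |P r - M r|
        + ENNReal.ofReal (b - a) * ENNReal.ofReal (M r)) := ENNReal.tsum_le_tsum pt
    _ = ENNReal.ofReal a * (∑' r, ENNReal.ofReal |P r - M r|)
        + ENNReal.ofReal (b - a) * (∑' r, ENNReal.ofReal (M r)) := by
        rw [ENNReal.tsum_add, ENNReal.tsum_mul_left, ENNReal.tsum_mul_left]
    _ ≤ ENNReal.ofReal a * C + ENNReal.ofReal (b - a) := by
        rw [hMs, mul_one]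
        exact add_le_add_left (mul_le_mul_right hC _) _

theorem branch {a b : ℝ} (ha : 0 ≤ a) (hb : 0 ≤ b) {P M : List ℕ → ℝ}
    (hPn : ∀ r, 0 ≤ P r) (hMn : ∀ r, 0 ≤ M r)
    (hPs : ∑' r, ENNReal.ofReal (P r) = 1)
    (hMs : ∑' r, ENNReal.ofReal (M r) = 1) {C : ℝ≥0∞}
    (hC : ∑' r, ENNReal.ofReal |P r - M r| ≤ C) :
    ∑' r, ENNReal.ofReal |a * P r - b * M r|
      ≤ ENNReal.ofReal (min a b) * C + ENNReal.ofReal |a - b| := by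
  rcases le_total a b with hab | hab
  · rw [min_eq_left hab, abs_of_nonpos (by linarith : a - b ≤ 0), neg_sub]
    exact branch_le ha hab hMn hMs hC
  · rw [min_eq_right hab, abs_of_nonneg (by linarith : 0 ≤ a - b)]
    have hswap : ∀ r, ENNReal.ofReal |a * P r - b * M r|
        = ENNReal.ofReal |b * M r - a * P r| := fun r => by rw [abs_sub_comm]
    rw [tsum_congr hswap]
    have hC' : ∑' r, ENNReal.ofReal |M r - P r| ≤ C := by
      rw [tsum_congr (fun r => by rw [abs_sub_comm (M r)] :
        ∀ r, ENNReal.ofReal |M r - P r| = ENNReal.ofReal |P r - M r|)]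
      exact hC
    exact branch_le hb hab hPn hPs hC'

theorem main (η ε : ℝ) (hη0 : 0 < η) (hη1 : η ≤ 1) (hε : 0 ≤ ε) :
    ∀ T : ExpTree, T.valid η ε →
    ∑' ℓ, ENNReal.ofReal |T.probP ℓ - T.probM ℓ|
      ≤ ENNReal.ofReal (2 * (1 - η ^ (2 * ε * T.maxTime)))
  | .leaf, _ => by
      have hz : ∀ ℓ : List ℕ, ENNReal.ofReal |probP .leaf ℓ - probM .leaf ℓ| = 0 := by
        intro ℓ
        match ℓ with
        | [] => simp [probP, probM]
        | (i :: r) => simp [probP, probM]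
      rw [tsum_congr hz]
      simp
  | .node t n pP pM child, h => by
      obtain ⟨ht, hP, hM, hsP, hsM, hTV, hchild⟩ := h
      set S := Finset.univ.sup' Finset.univ_nonempty (fun i => maxTime (child i)) with hSdef
      have hS0 : 0 ≤ S := le_trans (maxTime_nonneg η ε _ (hchild 0))
        (Finset.le_sup' (fun i => maxTime (child i)) (Finset.mem_univ (0 : Fin (n+1))))
      set Q : ℝ := η ^ (2 * ε * S) with hQdef
      have hQ0 : 0 < Q := Real.rpow_pos_of_pos hη0 _
      have hQ1 : Q ≤ 1 := Real.rpow_le_one hη0.le hη1 (by positivity)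
      set C : ℝ≥0∞ := ENNReal.ofReal (2 * (1 - Q)) with hCdef
      have hchildC : ∀ i : Fin (n+1),
          ∑' r, ENNReal.ofReal |probP (child i) r - probM (child i) r| ≤ C := by
        intro i
        refine le_trans (main η ε hη0 hη1 hε (child i) (hchild i)) ?_
        apply ENNReal.ofReal_le_ofReal
        have h1 : 2 * ε * maxTime (child i) ≤ 2 * ε * S :=
          mul_le_mul_of_nonneg_left (Finset.le_sup' (fun i => maxTime (child i)) (Finset.mem_univ i)) (by linarith)
        have h2 : Q ≤ η ^ (2 * ε * maxTime (child i)) := by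
          rw [hQdef]
          exact Real.rpow_le_rpow_of_exponent_ge hη0 hη1 h1
        linarith
      have key : ∀ i : Fin (n+1),
          ∑' r, ENNReal.ofReal |probP (.node t n pP pM child) (↑i :: r)
              - probM (.node t n pP pM child) (↑i :: r)|
          ≤ ENNReal.ofReal (min (pP i) (pM i)) * C + ENNReal.ofReal |pP i - pM i| := by
        intro i
        have hrw : ∀ r : List ℕ, ENNReal.ofReal |probP (.node t n pP pM child) (↑i :: r)
            - probM (.node t n pP pM child) (↑i :: r)|
            = ENNReal.ofReal |pP i * probP (child i) r - pM i * probM (child i) r| := by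
          intro r
          simp only [probP, probM, dif_pos i.isLt, Fin.eta]
        rw [tsum_congr hrw]
        exact branch (hP i) (hM i) (probP_nonneg η ε _ (hchild i)) (probM_nonneg η ε _ (hchild i))
          (tsum_probP η ε _ (hchild i)) (tsum_probM η ε _ (hchild i)) (hchildC i)
      -- assemble
      have hstep1 : ∑' ℓ, ENNReal.ofReal |probP (.node t n pP pM child) ℓ
          - probM (.node t n pP pM child) ℓ|
          = ∑ i : Fin (n+1), ∑' r, ENNReal.ofReal |probP (.node t n pP pM child) (↑i :: r)
              - probM (.node t n pP pM child) (↑i :: r)| := by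
        rw [tsum_cons _ (by simp [probP, probM])]
        exact tsum_to_fin (n := n) _ (fun i hi => by
          rw [ENNReal.tsum_eq_zero.2]
          intro r
          simp only [probP, probM, dif_neg hi, sub_zero, abs_zero, ENNReal.ofReal_zero])
      set D : ℝ := (1 / 2) * ∑ i, |pP i - pM i| with hDdef
      have hD0 : 0 ≤ D := by
        rw [hDdef]
        positivity
      have hmin1 : 0 ≤ min (2 * ε * t) 1 := le_min (by positivity) zero_le_one
      have hmin2 : min (2 * ε * t) 1 ≤ 1 := min_le_right _ _
      have hkey : η ^ (2 * ε * t) ≤ 1 - D := by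
        have h1 : η ^ (2 * ε * t) ≤ η ^ (min (2 * ε * t) 1) :=
          Real.rpow_le_rpow_of_exponent_ge hη0 hη1 (min_le_left _ _)
        have h2 := chord hη0 hη1 hmin1 hmin2
        have h3 : D ≤ (1 - η) * min (2 * ε * t) 1 := hTV
        linarith
      have hD1 : D ≤ 1 := by
        have := Real.rpow_pos_of_pos hη0 (2 * ε * t)
        linarith
      have hsum_min : ∑ i, min (pP i) (pM i) = 1 - D := by
        rw [Finset.sum_congr rfl (fun i _ => min_eq_half (pP i) (pM i))]
        rw [hDdef]
        rw [← Finset.sum_div, Finset.sum_sub_distrib, Finset.sum_add_distrib, hsP, hsM]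
        ring
      calc ∑' ℓ, ENNReal.ofReal |probP (.node t n pP pM child) ℓ
            - probM (.node t n pP pM child) ℓ|
          = ∑ i : Fin (n+1), ∑' r, ENNReal.ofReal |probP (.node t n pP pM child) (↑i :: r)
              - probM (.node t n pP pM child) (↑i :: r)| := hstep1
        _ ≤ ∑ i : Fin (n+1), (ENNReal.ofReal (min (pP i) (pM i)) * C
              + ENNReal.ofReal |pP i - pM i|) := Finset.sum_le_sum (fun i _ => key i)
        _ = (∑ i : Fin (n+1), ENNReal.ofReal (min (pP i) (pM i))) * C
              + ∑ i : Fin (n+1), ENNReal.ofReal |pP i - pM i| := by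
            rw [Finset.sum_add_distrib, Finset.sum_mul]
        _ = ENNReal.ofReal (1 - D) * C + ENNReal.ofReal (∑ i, |pP i - pM i|) := by
            rw [← ENNReal.ofReal_sum_of_nonneg (fun i _ => le_min (hP i) (hM i)),
              ← ENNReal.ofReal_sum_of_nonneg (fun i _ => abs_nonneg _), hsum_min]
        _ ≤ ENNReal.ofReal (2 * (1 - η ^ (2 * ε * maxTime (.node t n pP pM child)))) := by
            simp only [maxTime, ← hSdef]
            rw [hCdef, ← ENNReal.ofReal_mul (by linarith : (0:ℝ) ≤ 1 - D),
              ← ENNReal.ofReal_add (by nlinarith) (by positivity)]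
            apply ENNReal.ofReal_le_ofReal
            have hsplit : η ^ (2 * ε * (t + S)) = η ^ (2 * ε * t) * Q := by
              rw [show 2 * ε * (t + S) = 2 * ε * t + 2 * ε * S from by ring,
                Real.rpow_add hη0]
            rw [hsplit]
            nlinarith [mul_le_mul_of_nonneg_right hkey hQ0.le]

end MyAux

/-- For any valid tree of adaptive experiments with measurement noise `η ∈ (0, 0.5)`,
the total variation distance between the induced leaf distributions is at most
`1 - η^{2ε·t(𝒯)}`. -/
theorem tv_leaf_bound (η ε : ℝ) (hη0 : 0 < η) (hη1 : η < 0.5) (hε : 0 < ε)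
    (T : ExpTree) (hT : T.valid η ε) :
    (1 / 2) * (∑' ℓ : List ℕ, |T.probP ℓ - T.probM ℓ|)
      ≤ 1 - η ^ (2 * ε * T.maxTime) := by
  have hη1' : η ≤ 1 := by norm_num at hη1 ⊢; linarith
  have hmt : 0 ≤ T.maxTime := MyAux.maxTime_nonneg η ε T hT
  have hRHS : η ^ (2 * ε * T.maxTime) ≤ 1 :=
    Real.rpow_le_one hη0.le hη1' (by positivity)
  by_cases hsum : Summable (fun ℓ : List ℕ => |T.probP ℓ - T.probM ℓ|)
  · have hm := MyAux.main η ε hη0 hη1' hε.le T hT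
    rw [← ENNReal.ofReal_tsum_of_nonneg (fun ℓ => abs_nonneg _) hsum] at hm
    have := (ENNReal.ofReal_le_ofReal_iff (by linarith)).mp hm
    linarith
  · rw [tsum_eq_zero_of_not_summable hsum]
    linarith
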